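/- Let K ≥ 1 and let t be a real number with 0 < t < K that is not an integer. Define x_s = (⌈t⌉ − t)/binom(K,⌊t⌋) for s = ⌊t⌋, x_s = (t − ⌊t⌋)/binom(K,⌈t⌉) for s = ⌈t⌉, and x_s = 0 otherwise. Then ∑_{s=0}^{K} binom(K,s)·x_s = 1 and ∑_{s=1}^{K} binom(K-1,s-1)·x_s = t/K. -/

import Mathlib

open Finset

/-- Feasibility of the generalized centralized placement (non-integer `t`). -/
theorem centralized_placement_feasible_noninteger (K : ℕ) (hK : 1 ≤ K)
    (t : ℝ) (ht0 : 0 < t) (htK : t < K) (hnotint : ¬ ∃ n : ℤ, t = (n : ℝ))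
    (x : ℕ → ℝ)
    (hx : ∀ s : ℕ, x s =
      if (s : ℤ) = ⌊t⌋ then ((⌈t⌉ : ℝ) - t) / (K.choose ⌊t⌋.toNat : ℝ)
      else if (s : ℤ) = ⌈t⌉ then (t - (⌊t⌋ : ℝ)) / (K.choose ⌈t⌉.toNat : ℝ)
      else 0) :
    (∑ s ∈ range (K + 1), (K.choose s : ℝ) * x s = 1) ∧
    (∑ s ∈ Icc 1 K, ((K - 1).choose (s - 1) : ℝ) * x s = t / K) := by
  have hfl0 : (0 : ℤ) ≤ ⌊t⌋ := Int.le_floor.mpr (by exact_mod_cast ht0.le)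
  set n : ℕ := ⌊t⌋.toNat with hn
  have hfl : ⌊t⌋ = (n : ℤ) := (Int.toNat_of_nonneg hfl0).symm
  have htne : t ≠ (⌊t⌋ : ℝ) := fun h => hnotint ⟨⌊t⌋, h⟩
  have hflt : (⌊t⌋ : ℝ) < t := lt_of_le_of_ne (Int.floor_le t) (Ne.symm htne)
  have hceil : ⌈t⌉ = ⌊t⌋ + 1 := by
    rw [Int.ceil_eq_iff]
    constructor
    · push_cast; linarith
    · push_cast; linarith [Int.lt_floor_add_one t]
  have hceiln : ⌈t⌉ = ((n : ℤ) + 1) := by rw [hceil, hfl]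
  have hceilnat : ⌈t⌉.toNat = n + 1 := by rw [hceiln]; simp
  have hnK : n < K := by
    have : (⌊t⌋ : ℝ) < (K : ℝ) := lt_trans hflt htK
    have : ⌊t⌋ < (K : ℤ) := by exact_mod_cast this
    omega
  have hc1 : (K.choose n : ℝ) ≠ 0 :=
    Nat.cast_ne_zero.mpr (Nat.choose_pos hnK.le).ne'
  have hc2 : (K.choose (n + 1) : ℝ) ≠ 0 :=
    Nat.cast_ne_zero.mpr (Nat.choose_pos hnK).ne'
  have hKne : (K : ℝ) ≠ 0 := Nat.cast_ne_zero.mpr (by omega)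
  clear_value n
  -- rewrite x
  have hx' : ∀ s : ℕ, x s =
      if s = n then ((n : ℝ) + 1 - t) / (K.choose n : ℝ)
      else if s = n + 1 then (t - (n : ℝ)) / (K.choose (n + 1) : ℝ)
      else 0 := by
    intro s
    rw [hx s, hceilnat, hceiln, hfl]
    have h1 : ((s : ℤ) = (n : ℤ)) = (s = n) := by
      apply propext; constructor <;> intro h <;> omega
    have h2 : ((s : ℤ) = (n : ℤ) + 1) = (s = n + 1) := by
      apply propext; constructor <;> intro h <;> omega
    simp only [h1, h2]
    push_cast
    rfl
  have hfloorcast : (⌊t⌋ : ℝ) = (n : ℝ) := by rw [hfl]; simp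
  -- first sum
  have sum1 : ∑ s ∈ range (K + 1), (K.choose s : ℝ) * x s = 1 := by
    have step : ∀ s ∈ range (K + 1), (K.choose s : ℝ) * x s =
        (if s = n then ((n : ℝ) + 1 - t) else 0) +
        (if s = n + 1 then (t - (n : ℝ)) else 0) := by
      intro s _
      rw [hx' s]
      by_cases h1 : s = n
      · subst h1; simp [hc1]; field_simp
      · by_cases h2 : s = n + 1
        · subst h2; simp [h1, hc2]; field_simp
        · simp [h1, h2]
    rw [Finset.sum_congr rfl step, Finset.sum_add_distrib,
      Finset.sum_ite_eq' (range (K + 1)) n, Finset.sum_ite_eq' (range (K + 1)) (n + 1)]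
    have hmem1 : n ∈ range (K + 1) := by simp; omega
    have hmem2 : n + 1 ∈ range (K + 1) := by simp; omega
    rw [if_pos hmem1, if_pos hmem2]; ring
  refine ⟨sum1, ?_⟩
  -- second sum
  have step2 : ∀ s ∈ Icc 1 K, ((K - 1).choose (s - 1) : ℝ) * x s =
      (if s = n then (n : ℝ) / K * ((n : ℝ) + 1 - t) else 0) +
      (if s = n + 1 then ((n : ℝ) + 1) / K * (t - (n : ℝ)) else 0) := by
    intro s hs
    simp only [Finset.mem_Icc] at hs
    rw [hx' s]
    by_cases h1 : s = n
    · have hn1 : 1 ≤ n := h1 ▸ hs.1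
      have hid : K * (K - 1).choose (n - 1) = K.choose n * n := by
        have := Nat.add_one_mul_choose_eq (K - 1) (n - 1)
        have e1 : K - 1 + 1 = K := by omega
        have e2 : n - 1 + 1 = n := by omega
        rw [e1, e2] at this
        exact this
      have hidR : (K : ℝ) * ((K - 1).choose (n - 1) : ℝ) = (K.choose n : ℝ) * n := by
        exact_mod_cast congrArg (Nat.cast : ℕ → ℝ) hid
      rw [if_pos h1, if_pos h1, if_neg (by omega), h1]
      field_simp
      linear_combination ((n : ℝ) + 1 - t) * hidR
    · by_cases h2 : s = n + 1
      · have hid : K * (K - 1).choose n = K.choose (n + 1) * (n + 1) := by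
          have := Nat.add_one_mul_choose_eq (K - 1) n
          have e1 : K - 1 + 1 = K := by omega
          rw [e1] at this
          simpa using this
        have hidR : (K : ℝ) * ((K - 1).choose n : ℝ) = (K.choose (n + 1) : ℝ) * ((n : ℝ) + 1) := by
          exact_mod_cast congrArg (Nat.cast : ℕ → ℝ) hid
        rw [if_neg h1, if_pos h2, if_neg h1, if_pos h2, h2, Nat.add_sub_cancel]
        field_simp
        linear_combination (t - (n : ℝ)) * hidR
      · simp [h1, h2]
  rw [Finset.sum_congr rfl step2, Finset.sum_add_distrib,
    Finset.sum_ite_eq' (Icc 1 K) n, Finset.sum_ite_eq' (Icc 1 K) (n + 1)]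
  have hmem2 : n + 1 ∈ Icc 1 K := by simp [Finset.mem_Icc]; omega
  rw [if_pos hmem2]
  by_cases h0 : n = 0
  · rw [h0] at *
    rw [if_neg (by simp)]
    push_cast
    field_simp
    ring
  · rw [if_pos (by simp [Finset.mem_Icc]; omega)]
    field_simp
    ring
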